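/- Let 0 < q < 1, let a > 1 be an integer, and define f[x^a y; \theta] := \sum_{m=1}^\infty q^{am}/([m]_q^a([m]_q - \theta q^m)) and f[x^{a-1}y; \theta] := \sum_{m=1}^\infty q^{(a-1)m}/([m]_q^{a-1}([m]_q - \theta q^m)). Then for \theta with |\theta| < 1/q and \theta' := q\theta - 1, one has f[x^{a-1}y; \theta] - \theta f[x^a y; \theta] = f[x^{a-1}y; \theta'] - \theta' f[x^a y; \theta']. -/

import Mathlib

noncomputable def qnum (q : ℝ) (k : ℕ) : ℝ := (1 - q ^ k) / (1 - q)

noncomputable def fser (q θ : ℝ) (a : ℕ) : ℝ :=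
  ∑' m : ℕ+, q ^ (a * (m : ℕ)) /
    ((qnum q m) ^ a * (qnum q m - θ * q ^ (m : ℕ)))

lemma one_le_qnum (q : ℝ) (hq0 : 0 < q) (hq1 : q < 1) (k : ℕ) (hk : 1 ≤ k) :
    1 ≤ qnum q k := by
  rw [qnum, le_div_iff₀ (by linarith)]
  have : q ^ k ≤ q ^ 1 := pow_le_pow_of_le_one hq0.le hq1.le hk
  simpa using by linarith [this]

lemma qnum_succ (q : ℝ) (hq1 : q < 1) (k : ℕ) :
    qnum q (k + 1) = qnum q k + q ^ k := by
  have h : (1 : ℝ) - q ≠ 0 := by linarith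
  unfold qnum
  field_simp
  ring

lemma denom_lb (q θ : ℝ) (hq0 : 0 < q) (hq1 : q < 1) (m : ℕ+) :
    1 - q * |θ| ≤ qnum q m - θ * q ^ (m : ℕ) := by
  have h1 : 1 ≤ qnum q m := one_le_qnum q hq0 hq1 m m.one_le
  have hqm : q ^ (m : ℕ) ≤ q := by
    have : q ^ (m : ℕ) ≤ q ^ 1 := pow_le_pow_of_le_one hq0.le hq1.le m.one_le
    simpa using this
  have h2 : θ * q ^ (m : ℕ) ≤ |θ| * q := by
    calc θ * q ^ (m : ℕ) ≤ |θ| * q ^ (m : ℕ) :=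
          mul_le_mul_of_nonneg_right (le_abs_self θ) (by positivity)
      _ ≤ |θ| * q := mul_le_mul_of_nonneg_left hqm (abs_nonneg θ)
  nlinarith

lemma denom_lb' (q θ : ℝ) (hq0 : 0 < q) (hq1 : q < 1) (m : ℕ+) :
    1 - q * |θ| ≤ qnum q m - (q * θ - 1) * q ^ (m : ℕ) := by
  have key : qnum q m - (q * θ - 1) * q ^ (m : ℕ)
      = qnum q ((m : ℕ) + 1) - θ * q ^ ((m : ℕ) + 1) := by
    rw [qnum_succ q hq1]
    ring
  rw [key]
  have h1 : 1 ≤ qnum q ((m : ℕ) + 1) := one_le_qnum q hq0 hq1 _ (by omega)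
  have hqm : q ^ ((m : ℕ) + 1) ≤ q := by
    have : q ^ ((m : ℕ) + 1) ≤ q ^ 1 := pow_le_pow_of_le_one hq0.le hq1.le (by omega)
    simpa using this
  have h2 : θ * q ^ ((m : ℕ) + 1) ≤ |θ| * q := by
    calc θ * q ^ ((m : ℕ) + 1) ≤ |θ| * q ^ ((m : ℕ) + 1) :=
          mul_le_mul_of_nonneg_right (le_abs_self θ) (by positivity)
      _ ≤ |θ| * q := mul_le_mul_of_nonneg_left hqm (abs_nonneg θ)
  nlinarith

lemma summable_geom_pnat (r : ℝ) (hr0 : 0 ≤ r) (hr1 : r < 1) :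
    Summable (fun m : ℕ+ => r ^ (m : ℕ)) := by
  have h : Summable (fun n : ℕ => r ^ n) := summable_geometric_of_lt_one hr0 hr1
  exact h.comp_injective (fun a b hab => PNat.coe_injective hab)

lemma summable_term (q ψ : ℝ) (hq0 : 0 < q) (hq1 : q < 1) (b : ℕ) (hb : 1 ≤ b)
    (c : ℝ) (hc : 0 < c) (hlb : ∀ m : ℕ+, c ≤ qnum q m - ψ * q ^ (m : ℕ)) :
    Summable (fun m : ℕ+ => q ^ (b * (m : ℕ)) /
      (qnum q m ^ b * (qnum q m - ψ * q ^ (m : ℕ)))) := by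
  have hqb : q ^ b < 1 := by
    calc q ^ b ≤ q ^ 1 := pow_le_pow_of_le_one hq0.le hq1.le hb
      _ < 1 := by simpa using hq1
  have hgeom : Summable (fun m : ℕ+ => (q ^ b) ^ (m : ℕ) / c) :=
    (summable_geom_pnat (q ^ b) (by positivity) hqb).div_const c
  apply Summable.of_nonneg_of_le _ _ hgeom
  · intro m
    have h1 : 1 ≤ qnum q m := one_le_qnum q hq0 hq1 m m.one_le
    have h2 := hlb m
    exact div_nonneg (by positivity) (mul_nonneg (by positivity) (by linarith))
  · intro m
    have h1 : 1 ≤ qnum q m := one_le_qnum q hq0 hq1 m m.one_le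
    have h2 := hlb m
    have hD : c ≤ qnum q m ^ b * (qnum q m - ψ * q ^ (m : ℕ)) := by
      calc c = 1 * c := (one_mul c).symm
        _ ≤ qnum q m ^ b * (qnum q m - ψ * q ^ (m : ℕ)) :=
          mul_le_mul (one_le_pow₀ h1) h2 hc.le (by positivity)
    rw [pow_mul]
    exact div_le_div_of_nonneg_left (by positivity) hc hD

lemma summable_g (q : ℝ) (hq0 : 0 < q) (hq1 : q < 1) (b a : ℕ) (hb : 1 ≤ b) :
    Summable (fun m : ℕ+ => q ^ (b * (m : ℕ)) / qnum q m ^ a) := by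
  have hqb : q ^ b < 1 := by
    calc q ^ b ≤ q ^ 1 := pow_le_pow_of_le_one hq0.le hq1.le hb
      _ < 1 := by simpa using hq1
  have hgeom : Summable (fun m : ℕ+ => (q ^ b) ^ (m : ℕ)) :=
    summable_geom_pnat (q ^ b) (by positivity) hqb
  apply Summable.of_nonneg_of_le _ _ hgeom
  · intro m
    have h1 : 1 ≤ qnum q m := one_le_qnum q hq0 hq1 m m.one_le
    positivity
  · intro m
    have h1 : 1 ≤ qnum q m := one_le_qnum q hq0 hq1 m m.one_le
    have hP : 1 ≤ qnum q m ^ a := one_le_pow₀ h1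
    rw [pow_mul]
    calc (q ^ b) ^ (m:ℕ) / qnum q m ^ a ≤ (q ^ b) ^ (m : ℕ) / 1 :=
          div_le_div_of_nonneg_left (by positivity) one_pos hP
      _ = (q ^ b) ^ (m : ℕ) := by rw [div_one]

theorem fser_difference_equation (q θ : ℝ) (hq0 : 0 < q) (hq1 : q < 1)
    (a : ℕ) (ha : 1 < a) (hθ : |θ| < 1 / q) :
    fser q θ (a - 1) - θ * fser q θ a
      = fser q (q * θ - 1) (a - 1) - (q * θ - 1) * fser q (q * θ - 1) a := by
  obtain ⟨b, rfl⟩ : ∃ b, a = b + 1 := ⟨a - 1, by omega⟩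
  have hb : 1 ≤ b := by omega
  set c : ℝ := 1 - q * |θ| with hc_def
  have hc : 0 < c := by
    have : q * |θ| < q * (1 / q) := by
      apply mul_lt_mul_of_pos_left hθ hq0
    rw [mul_one_div, div_self hq0.ne'] at this
    linarith
  have key : ∀ ψ : ℝ, (∀ m : ℕ+, c ≤ qnum q m - ψ * q ^ (m : ℕ)) →
      fser q ψ (b + 1 - 1) - ψ * fser q ψ (b + 1)
        = ∑' m : ℕ+, q ^ (b * (m : ℕ)) / qnum q m ^ (b + 1) := by
    intro ψ hlb
    have hsumT := summable_term q ψ hq0 hq1 (b + 1) (by omega) c hc hlb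
    have hsumG := summable_g q hq0 hq1 b (b + 1) hb
    have hpt : ∀ m : ℕ+, q ^ ((b + 1 - 1) * (m : ℕ)) /
        (qnum q m ^ (b + 1 - 1) * (qnum q m - ψ * q ^ (m : ℕ)))
        = ψ * (q ^ ((b + 1) * (m : ℕ)) /
            (qnum q m ^ (b + 1) * (qnum q m - ψ * q ^ (m : ℕ))))
          + q ^ (b * (m : ℕ)) / qnum q m ^ (b + 1) := by
      intro m
      have h1 : 1 ≤ qnum q m := one_le_qnum q hq0 hq1 m m.one_le
      have h2 := hlb m
      have hN : qnum q m ≠ 0 := by linarith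
      have hD : qnum q m - ψ * q ^ (m : ℕ) ≠ 0 := by linarith
      have hbb : b + 1 - 1 = b := by omega
      rw [hbb]
      field_simp
      ring
    have : fser q ψ (b + 1 - 1)
        = ψ * fser q ψ (b + 1) + ∑' m : ℕ+, q ^ (b * (m : ℕ)) / qnum q m ^ (b + 1) := by
      rw [fser]
      rw [tsum_congr hpt]
      rw [Summable.tsum_add (hsumT.mul_left ψ) hsumG]
      rw [tsum_mul_left]
      rfl
    rw [this]
    ring
  have h1 := key θ (fun m => denom_lb q θ hq0 hq1 m)
  have h2 := key (q * θ - 1) (fun m => denom_lb' q θ hq0 hq1 m)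
  rw [h1, h2]
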